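/- Let Γ be a graph and K a finite graph. If there is a finite set X of vertices of Γ such that every subgraph of Γ isomorphic to K contains a vertex of X, then there is a finite Aut(Γ)-invariant set Y of vertices of Γ with the same property and |Y| ≤ |X| · |V(K)|. -/

import Mathlib

/-- `X` meets every subgraph of `Γ` isomorphic to `K`. -/
def KCover {W V : Type} (K : SimpleGraph W) (Γ : SimpleGraph V) (X : Set V) : Prop :=
  ∀ f : K →g Γ, Function.Injective f → ∃ w : W, f w ∈ X

/-- `X` is invariant under all automorphisms of `Γ`. -/
def AutInvariant {V : Type} (Γ : SimpleGraph V) (X : Set V) : Prop :=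
  ∀ g : Γ ≃g Γ, (fun v => g v) '' X = X

open MulAction
open scoped Pointwise

/-- The automorphism group of `Γ` as a subgroup of `Equiv.Perm V`. -/
def autSub {V : Type} (Γ : SimpleGraph V) : Subgroup (Equiv.Perm V) where
  carrier := {π | ∀ a b : V, Γ.Adj (π a) (π b) ↔ Γ.Adj a b}
  one_mem' := by intro a b; simp
  mul_mem' := by
    intro π σ hπ hσ a b
    simp only [Equiv.Perm.mul_apply]
    exact (hπ (σ a) (σ b)).trans (hσ a b)
  inv_mem' := by
    intro π hπ a b
    have := (hπ (π⁻¹ a) (π⁻¹ b)).symm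
    simpa using this

lemma mem_autSub {V : Type} {Γ : SimpleGraph V} {π : Equiv.Perm V} :
    π ∈ autSub Γ ↔ ∀ a b : V, Γ.Adj (π a) (π b) ↔ Γ.Adj a b := Iff.rfl

/-- An automorphism of `Γ` as an element of `autSub Γ`. -/
def isoToAut {V : Type} {Γ : SimpleGraph V} (g : Γ ≃g Γ) : ↥(autSub Γ) :=
  ⟨g.toEquiv, fun a b => g.map_adj_iff⟩

lemma isoToAut_smul {V : Type} {Γ : SimpleGraph V} (g : Γ ≃g Γ) (v : V) :
    (isoToAut g) • v = g v := rfl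

/-- An element of `autSub Γ` as an automorphism of `Γ`. -/
def autToIso {V : Type} {Γ : SimpleGraph V} (π : ↥(autSub Γ)) : Γ ≃g Γ :=
  ⟨π.1, fun {a b} => π.2 a b⟩

lemma autToIso_apply {V : Type} {Γ : SimpleGraph V} (π : ↥(autSub Γ)) (v : V) :
    autToIso π v = π • v := rfl

/-- The key covering lemma, via B. H. Neumann's coset covering lemma:
every injective copy of `K` contains a vertex whose `Aut(Γ)`-orbit `O` is finite
and satisfies `|O| ≤ |W| ⬝ |X ∩ O|`. -/
lemma key_cover {W V : Type} [Fintype W] [Nonempty W] (K : SimpleGraph W) (Γ : SimpleGraph V)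
    (X : Set V) (hXfin : X.Finite) (hX : KCover K Γ X) (f : K →g Γ)
    (hf : Function.Injective f) :
    ∃ w : W, (orbit (autSub Γ) (f w)).Finite ∧
      (orbit (autSub Γ) (f w)).ncard
        ≤ Fintype.card W * (X ∩ orbit (autSub Γ) (f w)).ncard := by
  classical
  by_contra hcon
  push_neg at hcon
  haveI : Fintype ↥X := hXfin.fintype
  set k := Fintype.card W with hk
  have hkpos : 0 < k := Fintype.card_pos
  set A := autSub Γ with hA
  let P : W × ↥X → Prop := fun p => (p.2 : V) ∈ orbit A (f p.1)
  let s : Finset (W × ↥X) := Finset.univ.filter P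
  let Hs : W × ↥X → Subgroup ↥A := fun p => stabilizer ↥A (f p.1)
  let gs : W × ↥X → ↥A := fun p =>
    if h : P p then (mem_orbit_iff.mp h).choose else 1
  have hgs : ∀ p, P p → gs p • f p.1 = (p.2 : V) := by
    intro p hp
    simp only [gs, dif_pos hp]
    exact (mem_orbit_iff.mp hp).choose_spec
  have hcovers : ⋃ i ∈ s, (gs i) • (Hs i : Set ↥A) = Set.univ := by
    rw [Set.eq_univ_iff_forall]
    intro π
    have hinj : Function.Injective ((autToIso π).toHom.comp f) :=
      (autToIso π).toEquiv.injective.comp hf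
    obtain ⟨w, hw⟩ := hX ((autToIso π).toHom.comp f) hinj
    have hwx : (autToIso π) (f w) ∈ X := hw
    set x : ↥X := ⟨(autToIso π) (f w), hwx⟩ with hxdef
    have hP : P (w, x) := by
      exact mem_orbit_iff.mpr ⟨π, rfl⟩
    have hmem : (w, x) ∈ s := Finset.mem_filter.mpr ⟨Finset.mem_univ _, hP⟩
    refine Set.mem_biUnion hmem ?_
    rw [mem_leftCoset_iff]
    have hx1 : gs (w, x) • f w = (x : V) := hgs (w, x) hP
    have hx2 : π • f w = (x : V) := rfl
    refine mem_stabilizer_iff.mpr ?_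
    rw [mul_smul, hx2, ← hx1, inv_smul_smul]
  have hsum := Subgroup.one_le_sum_inv_index_of_leftCoset_cover hcovers
  -- now bound the sum strictly below 1
  have hterm : ∀ w : W,
      ((Finset.univ.filter fun x : ↥X => (x : V) ∈ orbit A (f w)).card : ℚ)
        * ((stabilizer ↥A (f w)).index : ℚ)⁻¹ < (k : ℚ)⁻¹ := by
    intro w
    have hindex : (stabilizer ↥A (f w)).index = (orbit A (f w)).ncard :=
      index_stabilizer _ _
    have hcard : (Finset.univ.filter fun x : ↥X => (x : V) ∈ orbit A (f w)).card
        = (X ∩ orbit A (f w)).ncard := by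
      have hequiv : Nat.card {x : ↥X // (x : V) ∈ orbit A (f w)}
          = Nat.card ↥(X ∩ orbit A (f w)) :=
        Nat.card_congr (Equiv.subtypeSubtypeEquivSubtypeInter
          (fun v => v ∈ X) (fun v => v ∈ orbit A (f w)))
      rw [← Nat.card_coe_set_eq, ← hequiv, Nat.card_eq_fintype_card,
        Fintype.card_subtype]
    by_cases hfin : (orbit A (f w)).Finite
    · have hlt : k * (X ∩ orbit A (f w)).ncard < (orbit A (f w)).ncard := by
        have := hcon w hfin
        omega
      have hpos : 0 < (orbit A (f w)).ncard :=
        (Set.ncard_pos hfin).mpr ⟨f w, mem_orbit_self _⟩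
      rw [hcard, hindex]
      rw [inv_eq_one_div, inv_eq_one_div, mul_one_div, div_lt_div_iff₀ (by exact_mod_cast hpos)
        (by exact_mod_cast hkpos)]
      rw [one_mul]
      calc ((X ∩ orbit A (f w)).ncard : ℚ) * k = (k * (X ∩ orbit A (f w)).ncard : ℕ) := by
            push_cast; ring
        _ < ((orbit A (f w)).ncard : ℚ) := by exact_mod_cast hlt
    · have : (orbit A (f w)).ncard = 0 := (Set.Infinite.ncard (by simpa using hfin))
      rw [hindex, this]
      simp only [Nat.cast_zero, inv_zero, mul_zero]
      positivity
  have hlt1 : ∑ i ∈ s, ((Hs i).index : ℚ)⁻¹ < 1 := by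
    have h1 : ∑ i ∈ s, ((Hs i).index : ℚ)⁻¹
        = ∑ p : W × ↥X, if P p then ((stabilizer ↥A (f p.1)).index : ℚ)⁻¹ else 0 := by
      rw [Finset.sum_filter]
    rw [h1, Fintype.sum_prod_type]
    have h2 : ∀ w : W, (∑ x : ↥X,
        if P (w, x) then ((stabilizer ↥A (f w)).index : ℚ)⁻¹ else 0) < (k : ℚ)⁻¹ := by
      intro w
      have : (∑ x : ↥X, if P (w, x) then ((stabilizer ↥A (f w)).index : ℚ)⁻¹ else 0)
          = ((Finset.univ.filter fun x : ↥X => (x : V) ∈ orbit A (f w)).card : ℚ)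
            * ((stabilizer ↥A (f w)).index : ℚ)⁻¹ := by
        rw [← Finset.sum_filter, Finset.sum_const, nsmul_eq_mul]
      rw [this]
      exact hterm w
    calc ∑ w : W, (∑ x : ↥X,
          if P (w, x) then ((stabilizer ↥A (f w)).index : ℚ)⁻¹ else 0)
        < ∑ _w : W, (k : ℚ)⁻¹ := Finset.sum_lt_sum_of_nonempty Finset.univ_nonempty
          (fun w _ => h2 w)
      _ = 1 := by
          rw [Finset.sum_const, Finset.card_univ, ← hk, nsmul_eq_mul,
            mul_inv_cancel₀ (by exact_mod_cast hkpos.ne')]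
  linarith

/-- Corollary KL: if a finite vertex set `X` of a (possibly infinite) graph `Γ` meets
every subgraph of `Γ` isomorphic to a finite graph `K`, then there is a finite
`Aut(Γ)`-invariant vertex set `Y` with the same property and `|Y| ≤ |X|·|V(K)|`. -/
theorem stmt18 {W V : Type} [Fintype W] (K : SimpleGraph W) (Γ : SimpleGraph V)
    (X : Set V) (hXfin : X.Finite) (hX : KCover K Γ X) :
    ∃ Y : Set V, Y.Finite ∧ AutInvariant Γ Y ∧ KCover K Γ Y ∧
      Nat.card Y ≤ Nat.card X * Fintype.card W := by
  classical
  rcases isEmpty_or_nonempty W with hW | hW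
  · -- no vertices in `K`: `X` cannot meet the empty copy of `K`, contradiction
    exfalso
    have f : K →g Γ := ⟨fun w => isEmptyElim w, fun {a b} _ => isEmptyElim a⟩
    obtain ⟨w, -⟩ := hX f (fun a b _ => isEmptyElim a)
    exact isEmptyElim w
  set k := Fintype.card W with hk
  set A := autSub Γ with hA
  set Y : Set V := {v | (orbit A v).Finite ∧
    (orbit A v).ncard ≤ k * (X ∩ orbit A v).ncard} with hY
  have hYorb : ∀ u v : V, orbit A u = orbit A v → (u ∈ Y ↔ v ∈ Y) := by
    intro u v h
    simp only [hY, Set.mem_setOf_eq, h]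
  -- Y is closed under orbits
  have horbY : ∀ v ∈ Y, orbit A v ⊆ Y := by
    intro v hv u hu
    exact (hYorb u v (orbit_eq_iff.mpr hu)).mpr hv
  -- Y is contained in the orbits of points of X ∩ Y
  have hsub : Y ⊆ ⋃ x ∈ X ∩ Y, orbit A x := by
    intro v hv
    have hpos : 0 < (orbit A v).ncard := (Set.ncard_pos hv.1).mpr ⟨v, mem_orbit_self _⟩
    have hne : (X ∩ orbit A v).Nonempty := by
      apply Set.nonempty_of_ncard_ne_zero
      intro h0
      have := hv.2
      rw [h0, mul_zero] at this
      omega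
    obtain ⟨x, hxX, hxO⟩ := hne
    have heq : orbit A x = orbit A v := orbit_eq_iff.mpr hxO
    have hxY : x ∈ Y := (hYorb x v heq).mpr hv
    refine Set.mem_biUnion (⟨hxX, hxY⟩ : x ∈ X ∩ Y) ?_
    rw [heq]; exact mem_orbit_self _
  have hYfin : Y.Finite := by
    refine Set.Finite.subset (Set.Finite.biUnion (hXfin.inter_of_left Y) ?_) hsub
    intro x hx
    exact hx.2.1
  refine ⟨Y, hYfin, ?_, ?_, ?_⟩
  · -- invariance
    have hstep : ∀ (e : Γ ≃g Γ) v, v ∈ Y → e v ∈ Y := by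
      intro e v hv
      have : orbit A (e v) = orbit A v := by
        have : e v = (isoToAut e) • v := rfl
        rw [this, orbit_smul]
      exact (hYorb (e v) v this).mpr hv
    intro g
    apply Set.eq_of_subset_of_subset
    · rintro u ⟨v, hv, rfl⟩
      exact hstep g v hv
    · intro u hu
      exact ⟨g.symm u, hstep g.symm u hu, g.apply_symm_apply u⟩
  · -- cover property
    intro f hf
    obtain ⟨w, h1, h2⟩ := key_cover K Γ X hXfin hX f hf
    exact ⟨w, h1, h2⟩
  · -- cardinality bound
    let YF := hYfin.toFinset
    let XF := hXfin.toFinset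
    let t : V → Finset V := fun v => YF.filter (· ∈ orbit A v)
    let 𝒪 : Finset (Finset V) := YF.image t
    have htmemY : ∀ v u : V, u ∈ t v → u ∈ Y := by
      intro v u hu
      exact hYfin.mem_toFinset.mp (Finset.mem_filter.mp hu).1
    have htcoe : ∀ v ∈ Y, (t v : Set V) = orbit A v := by
      intro v hv
      ext u
      simp only [t, Finset.coe_filter, Set.mem_setOf_eq, hYfin.mem_toFinset]
      constructor
      · exact fun h => h.2
      · exact fun h => ⟨hYfin.mem_toFinset.mpr (horbY v hv h), h⟩
    have hdisj : ∀ O₁ ∈ 𝒪, ∀ O₂ ∈ 𝒪, O₁ ≠ O₂ → Disjoint O₁ O₂ := by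
      intro O₁ h₁ O₂ h₂ hne
      obtain ⟨v₁, hv₁, rfl⟩ := Finset.mem_image.mp h₁
      obtain ⟨v₂, hv₂, rfl⟩ := Finset.mem_image.mp h₂
      rw [Finset.disjoint_left]
      intro u hu₁ hu₂
      apply hne
      have e₁ : orbit A u = orbit A v₁ := orbit_eq_iff.mpr (Finset.mem_filter.mp hu₁).2
      have e₂ : orbit A u = orbit A v₂ := orbit_eq_iff.mpr (Finset.mem_filter.mp hu₂).2
      simp only [t, e₁.symm.trans e₂]
    have hYB : YF = 𝒪.biUnion id := by
      ext u
      simp only [Finset.mem_biUnion, 𝒪, Finset.mem_image, id]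
      constructor
      · intro hu
        exact ⟨t u, ⟨u, hu, rfl⟩, Finset.mem_filter.mpr ⟨hu, mem_orbit_self _⟩⟩
      · rintro ⟨O, ⟨v, hv, rfl⟩, hu⟩
        exact (Finset.mem_filter.mp hu).1
    let ψ : Finset V → Finset V := fun O => XF.filter (· ∈ O)
    have hψsub : ∀ O, ψ O ⊆ XF := fun O => Finset.filter_subset _ _
    have hψO : ∀ O, ∀ u ∈ ψ O, u ∈ O := fun O u hu => (Finset.mem_filter.mp hu).2
    have hcardO : ∀ O ∈ 𝒪, O.card ≤ k * (ψ O).card := by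
      intro O hO
      obtain ⟨v, hvYF, rfl⟩ := Finset.mem_image.mp hO
      have hvY : v ∈ Y := hYfin.mem_toFinset.mp hvYF
      have h1 : (t v).card = (orbit A v).ncard := by
        rw [← htcoe v hvY, Set.ncard_coe_finset]
      have h2 : (ψ (t v)).card = (X ∩ orbit A v).ncard := by
        have : (↑(ψ (t v)) : Set V) = X ∩ orbit A v := by
          ext u
          simp only [ψ, Finset.coe_filter, Set.mem_setOf_eq, hXfin.mem_toFinset,
            Set.mem_inter_iff]
          constructor
          · rintro ⟨h, h'⟩
            refine ⟨hXfin.mem_toFinset.mp h, ?_⟩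
            have := (Finset.mem_filter.mp h').2
            exact this
          · rintro ⟨h, h'⟩
            refine ⟨hXfin.mem_toFinset.mpr h, ?_⟩
            apply Finset.mem_filter.mpr
            refine ⟨hYfin.mem_toFinset.mpr (horbY v hvY h'), h'⟩
        rw [← Set.ncard_coe_finset, this]
      rw [h1, h2]
      exact hvY.2
    have hsum1 : YF.card = ∑ O ∈ 𝒪, O.card := by
      rw [hYB]
      exact Finset.card_biUnion hdisj
    have hψdisj : ∀ O₁ ∈ 𝒪, ∀ O₂ ∈ 𝒪, O₁ ≠ O₂ → Disjoint (ψ O₁) (ψ O₂) := by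
      intro O₁ h₁ O₂ h₂ hne
      have := hdisj O₁ h₁ O₂ h₂ hne
      rw [Finset.disjoint_left] at this ⊢
      intro u hu₁ hu₂
      exact this (hψO _ _ hu₁) (hψO _ _ hu₂)
    have hsum2 : ∑ O ∈ 𝒪, (ψ O).card ≤ XF.card := by
      rw [← Finset.card_biUnion hψdisj]
      apply Finset.card_le_card
      intro u hu
      obtain ⟨O, hO, huO⟩ := Finset.mem_biUnion.mp hu
      exact hψsub O huO
    have hmain : YF.card ≤ k * XF.card := by
      calc YF.card = ∑ O ∈ 𝒪, O.card := hsum1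
        _ ≤ ∑ O ∈ 𝒪, k * (ψ O).card := Finset.sum_le_sum hcardO
        _ = k * ∑ O ∈ 𝒪, (ψ O).card := by rw [Finset.mul_sum]
        _ ≤ k * XF.card := Nat.mul_le_mul_left k hsum2
    have hYcard : Nat.card ↥Y = YF.card := by
      rw [Nat.card_coe_set_eq, Set.ncard_eq_toFinset_card Y hYfin]
    have hXcard : Nat.card ↥X = XF.card := by
      rw [Nat.card_coe_set_eq, Set.ncard_eq_toFinset_card X hXfin]
    rw [hYcard, hXcard, mul_comm]
    exact hmain
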